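/- If Γ is a quasi-strongly connected circuit-free digraph on N, then Prod(N,v,Γ) = v(N) for every TU game v; equivalently, the Average Forest measure is efficient: Σ_{i∈N} AF_i(N,v,Γ) = v(N). -/

import Mathlib

open scoped Classical
open Finset
section Preamble

variable {V : Type*} [Fintype V] [DecidableEq V]

/-- Adjacency relation of a digraph given by its arc set. -/
def Adj (A : Finset (V × V)) (i j : V) : Prop := (i, j) ∈ A

/-- A digraph is circuit-free if it contains no directed cycle. -/
def CircuitFree (A : Finset (V × V)) : Prop :=
  ∀ i : V, ¬ Relation.TransGen (Adj A) i i

/-- In-degree of a node. -/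
def inDeg (A : Finset (V × V)) (j : V) : ℕ :=
  (A.filter (fun a => a.2 = j)).card

/-- Weak connectivity (chains, ignoring orientation). -/
def WConn (A : Finset (V × V)) (i j : V) : Prop :=
  Relation.ReflTransGen (fun a b => (a, b) ∈ A ∨ (b, a) ∈ A) i j

/-- The weakly connected component of `i`, as a finset. -/
noncomputable def compF (A : Finset (V × V)) (i : V) : Finset V :=
  Finset.univ.filter (fun j => WConn A i j)

/-- `IsPath A p` : `p` is a (nonempty) directed path along arcs of `A`. -/
def IsPath (A : Finset (V × V)) : List V → Prop
  | [] => False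
  | [_] => True
  | i :: j :: l => (i, j) ∈ A ∧ IsPath A (j :: l)

/-- The digraph `A` restricted to the node set `K` is an arborescence:
there is a root `r ∈ K` with a unique directed path from `r` to every node of `K`. -/
def IsArbOn (A : Finset (V × V)) (K : Set V) : Prop :=
  ∃ r ∈ K, ∀ i ∈ K, ∃! p : List V,
    IsPath A p ∧ p.head? = some r ∧ p.getLast? = some i

/-- A forest: every weakly connected component is an arborescence. -/
def IsForest (A : Finset (V × V)) : Prop :=
  ∀ i : V, IsArbOn A {j | WConn A i j}

/-- `F` is a maximal spanning forest of the digraph `A`. -/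
def IsMaxSpanningForest (A F : Finset (V × V)) : Prop :=
  F ⊆ A ∧ IsForest F ∧ ∀ a ∈ A, a ∉ F → ¬ IsForest (insert a F)

/-- The collection of all maximal spanning forests of `A`. -/
noncomputable def maxForests (A : Finset (V × V)) : Finset (Finset (V × V)) :=
  A.powerset.filter (fun F => IsMaxSpanningForest A F)

/-- `S̄_F(i)` : the node `i` together with all its successors in `F`. -/
noncomputable def succSet (F : Finset (V × V)) (i : V) : Finset V :=
  Finset.univ.filter (fun j => Relation.ReflTransGen (Adj F) i j)

/-- `Ŝ_F(i)` : the immediate successors of `i` in `F`. -/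
noncomputable def immSucc (F : Finset (V × V)) (i : V) : Finset V :=
  Finset.univ.filter (fun j => (i, j) ∈ F)

/-- Marginal contribution of player `i` with respect to the forest `F`. -/
noncomputable def marg (v : Finset V → ℝ) (F : Finset (V × V)) (i : V) : ℝ :=
  v (succSet F i) - ∑ j ∈ immSucc F i, v (succSet F j)

/-- The Average Forest leadership measure. -/
noncomputable def AF (v : Finset V → ℝ) (A : Finset (V × V)) (i : V) : ℝ :=
  (∑ F ∈ maxForests A, marg v F i) / (maxForests A).card

/-- The node sets of the arborescence components of a forest `F`. -/
noncomputable def comps (F : Finset (V × V)) : Finset (Finset V) :=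
  Finset.univ.image (fun i => compF F i)

/-- Productivity of the organisational situation. -/
noncomputable def Productivity (v : Finset V → ℝ) (A : Finset (V × V)) : ℝ :=
  (∑ F ∈ maxForests A, ∑ K ∈ comps F, v K) / (maxForests A).card

/-- Superadditivity of a TU game. -/
def Superadditive (v : Finset V → ℝ) : Prop :=
  ∀ S Q : Finset V, Disjoint S Q → v S + v Q ≤ v (S ∪ Q)

/-- Weak connectedness of the digraph. -/
def WeaklyConnected (A : Finset (V × V)) : Prop :=
  ∀ i j : V, WConn A i j

/-- Quasi-strong connectedness: existence of a root reaching every node. -/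
def HasRoot (A : Finset (V × V)) : Prop :=
  ∃ r : V, ∀ i : V, Relation.ReflTransGen (Adj A) r i

end Preamble
set_option linter.unusedSectionVars false

section Aux
variable {V : Type*} [Fintype V] [DecidableEq V]

lemma isPath_ne_nil {A : Finset (V × V)} {p : List V} (h : IsPath A p) : p ≠ [] := by
  cases p <;> simp_all [IsPath]

lemma wconn_step {A : Finset (V × V)} {i j : V} (h : (i, j) ∈ A ∨ (j, i) ∈ A) :
    WConn A i j := Relation.ReflTransGen.single h

lemma wconn_symm {A : Finset (V × V)} {i j : V} (h : WConn A i j) : WConn A j i := by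
  induction h with
  | refl => exact Relation.ReflTransGen.refl
  | tail _ h ih => exact Relation.ReflTransGen.trans (Relation.ReflTransGen.single h.symm) ih

lemma wconn_of_rtg {A : Finset (V × V)} {i j : V}
    (h : Relation.ReflTransGen (Adj A) i j) : WConn A i j :=
  Relation.ReflTransGen.mono (fun _ _ ha => Or.inl ha) _ _ h

lemma rtg_of_isPath {A : Finset (V × V)} :
    ∀ {p : List V} {a b : V}, IsPath A p → p.head? = some a → p.getLast? = some b →
      Relation.ReflTransGen (Adj A) a b
  | [], _, _, h, _, _ => absurd h (by simp [IsPath])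
  | [x], a, b, _, h1, h2 => by
      simp at h1 h2; subst h1; subst h2; exact Relation.ReflTransGen.refl
  | x :: y :: l, a, b, h, h1, h2 => by
      obtain ⟨hxy, hyl⟩ := h
      simp only [List.head?_cons, Option.some.injEq] at h1
      subst h1
      have h2' : (y :: l).getLast? = some b := by
        rwa [List.getLast?_cons_cons] at h2
      exact Relation.ReflTransGen.head hxy (rtg_of_isPath hyl rfl h2')

lemma isPath_concat {A : Finset (V × V)} :
    ∀ {p : List V} {b c : V}, IsPath A p → p.getLast? = some b → (b, c) ∈ A →
      IsPath A (p ++ [c])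
  | [], _, _, h, _, _ => absurd h (by simp [IsPath])
  | [x], b, c, _, h2, hbc => by
      simp at h2; subst h2; exact ⟨hbc, trivial⟩
  | x :: y :: l, b, c, h, h2, hbc => by
      obtain ⟨hxy, hyl⟩ := h
      rw [List.getLast?_cons_cons] at h2
      exact ⟨hxy, isPath_concat hyl h2 hbc⟩

lemma head?_append_single {p : List V} {c : V} (h : p ≠ []) :
    (p ++ [c]).head? = p.head? := by
  cases p with
  | nil => simp at h
  | cons x t => rfl

lemma exists_path_of_rtg {A : Finset (V × V)} {a b : V}
    (h : Relation.ReflTransGen (Adj A) a b) :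
    ∃ p : List V, IsPath A p ∧ p.head? = some a ∧ p.getLast? = some b := by
  induction h with
  | refl => exact ⟨[a], trivial, rfl, rfl⟩
  | @tail b c _ hbc ih =>
      obtain ⟨p, hp, h1, h2⟩ := ih
      exact ⟨p ++ [c], isPath_concat hp h2 hbc,
        (head?_append_single (isPath_ne_nil hp)).trans h1, by simp⟩

lemma isPath_decomp {A : Finset (V × V)} :
    ∀ {p : List V} {a b : V}, IsPath A p → p.head? = some a → p.getLast? = some b →
      2 ≤ p.length →
      ∃ (q : List V) (u : V), p = q ++ [b] ∧ IsPath A q ∧ q.head? = some a ∧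
        q.getLast? = some u ∧ (u, b) ∈ A
  | [], _, _, h, _, _, _ => absurd h (by simp [IsPath])
  | [x], _, _, _, _, _, hl => by simp at hl
  | x :: y :: l, a, b, h, h1, h2, _ => by
      obtain ⟨hxy, hyl⟩ := h
      simp only [List.head?_cons, Option.some.injEq] at h1
      subst h1
      cases l with
      | nil =>
          simp at h2
          subst h2
          exact ⟨[x], x, rfl, trivial, rfl, rfl, hxy⟩
      | cons z l' =>
          rw [List.getLast?_cons_cons] at h2
          obtain ⟨q, u, hq, hqp, hq1, hq2, hu⟩ :=
            isPath_decomp hyl rfl h2 (by simp)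
          obtain ⟨q', rfl⟩ : ∃ q', q = y :: q' := by
            cases q with
            | nil => simp at hq1
            | cons w t => simp only [List.head?_cons, Option.some.injEq] at hq1; subst hq1; exact ⟨t, rfl⟩
          refine ⟨x :: y :: q', u, by simp [hq], ⟨hxy, hqp⟩, rfl, ?_, hu⟩
          rw [List.getLast?_cons_cons]
          exact hq2

lemma inDeg_zero_iff {F : Finset (V × V)} {r : V} :
    inDeg F r = 0 ↔ ∀ x : V, (x, r) ∉ F := by
  unfold inDeg
  rw [Finset.card_eq_zero, Finset.filter_eq_empty_iff]
  constructor
  · intro h x hx; exact h hx rfl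
  · rintro h ⟨x, y⟩ hxy hy; exact h x (by rwa [show y = r from hy] at hxy)

lemma inDeg_pos_of_mem {F : Finset (V × V)} {u j : V} (h : (u, j) ∈ F) :
    inDeg F j ≠ 0 := fun h0 => (inDeg_zero_iff.mp h0) u h

lemma pred_unique {F : Finset (V × V)} {j : V} (hdeg : inDeg F j ≤ 1)
    {u w : V} (hu : (u, j) ∈ F) (hw : (w, j) ∈ F) : u = w := by
  have h1 : (F.filter (fun a => a.2 = j)).card ≤ 1 := hdeg
  have hu' : (u, j) ∈ F.filter (fun a => a.2 = j) := Finset.mem_filter.mpr ⟨hu, rfl⟩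
  have hw' : (w, j) ∈ F.filter (fun a => a.2 = j) := Finset.mem_filter.mpr ⟨hw, rfl⟩
  have := Finset.card_le_one.mp h1 _ hu' _ hw'
  exact congrArg Prod.fst this

/-- Any path ending at an in-degree-zero node is a singleton. -/
lemma path_to_root {F : Finset (V × V)} {r : V} (hr : inDeg F r = 0)
    {p : List V} (hp : IsPath F p) (h2 : p.getLast? = some r) : p = [r] := by
  rcases Nat.lt_or_ge p.length 2 with hl | hl
  · cases p with
    | nil => exact absurd hp (by simp [IsPath])
    | cons x t =>
        cases t with
        | nil => simp at h2; subst h2; rfl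
        | cons y l => simp only [List.length_cons] at hl; omega
  · obtain ⟨a, ha⟩ : ∃ a, p.head? = some a := by
      cases p with
      | nil => exact absurd hp (by simp [IsPath])
      | cons x t => exact ⟨x, rfl⟩
    obtain ⟨q, u, -, -, -, -, hu⟩ := isPath_decomp hp ha h2 hl
    exact absurd hu (inDeg_zero_iff.mp hr u)

lemma path_unique {F : Finset (V × V)} (hdeg : ∀ j, inDeg F j ≤ 1) {r : V}
    (hr : inDeg F r = 0) :
    ∀ (n : ℕ) (p q : List V), p.length ≤ n → IsPath F p → IsPath F q →
      p.head? = some r → q.head? = some r → p.getLast? = q.getLast? → p = q := by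
  intro n
  induction n with
  | zero =>
      intro p q hn hp _ _ _ _
      cases p with
      | nil => exact absurd hp (by simp [IsPath])
      | cons x t => simp at hn
  | succ m ih =>
      intro p q hn hp hq hp1 hq1 hlast
      obtain ⟨b, hb⟩ : ∃ b, p.getLast? = some b := by
        cases p with
        | nil => exact absurd hp (by simp [IsPath])
        | cons x t => exact ⟨_, List.getLast?_isSome.mpr (by simp) |> Option.isSome_iff_exists.mp |>.choose_spec⟩
      have hqb : q.getLast? = some b := hlast ▸ hb
      by_cases hbr : b = r
      · subst hbr
        rw [path_to_root hr hp hb, path_to_root hr hq hqb]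
      · -- both paths have length ≥ 2
        have hlen : ∀ s : List V, IsPath F s → s.head? = some r → s.getLast? = some b →
            2 ≤ s.length := by
          intro s hs h1 h2
          cases s with
          | nil => exact absurd hs (by simp [IsPath])
          | cons x t =>
              cases t with
              | nil => simp at h1 h2; exact absurd (h1.symm.trans h2).symm hbr
              | cons y l => simp
        obtain ⟨p', u, hpe, hp', hp'1, hp'2, hup⟩ :=
          isPath_decomp hp hp1 hb (hlen p hp hp1 hb)
        obtain ⟨q', w, hqe, hq', hq'1, hq'2, hwq⟩ :=
          isPath_decomp hq hq1 hqb (hlen q hq hq1 hqb)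
        have huw : u = w := pred_unique (hdeg b) hup hwq
        subst huw
        have hlen' : p'.length ≤ m := by
          have : p.length = p'.length + 1 := by rw [hpe]; simp
          omega
        have := ih p' q' hlen' hp' hq' hp'1 hq'1 (hp'2.trans hq'2.symm)
        rw [hpe, hqe, this]

lemma isForest_of_degrees {F : Finset (V × V)} (hcf : CircuitFree F)
    (hdeg : ∀ j, inDeg F j ≤ 1) : IsForest F := by
  have hwf : WellFounded (Relation.TransGen (Adj F)) := by
    letI : IsTrans V (Relation.TransGen (Adj F)) := ⟨fun _ _ _ => Relation.TransGen.trans⟩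
    letI : IsIrrefl V (Relation.TransGen (Adj F)) := ⟨hcf⟩
    exact Finite.wellFounded_of_trans_of_irrefl _
  have hanc : ∀ i : V, ∃ r, inDeg F r = 0 ∧ Relation.ReflTransGen (Adj F) r i := by
    intro i
    induction i using WellFounded.induction hwf with
    | _ i ih =>
      by_cases h0 : inDeg F i = 0
      · exact ⟨i, h0, Relation.ReflTransGen.refl⟩
      · have h0' : (F.filter (fun a => a.2 = i)).card ≠ 0 := h0
        obtain ⟨a, haa⟩ : (F.filter (fun a => a.2 = i)).Nonempty :=
          Finset.card_pos.mp (Nat.pos_of_ne_zero h0')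
        obtain ⟨haF, ha2⟩ := Finset.mem_filter.mp haa
        have hadj : (a.1, i) ∈ F := by rwa [← ha2]
        obtain ⟨r, h0r, hr⟩ := ih a.1 (Relation.TransGen.single hadj)
        exact ⟨r, h0r, hr.tail hadj⟩
  have hkey : ∀ r, inDeg F r = 0 → ∀ a b, (a, b) ∈ F →
      (Relation.ReflTransGen (Adj F) r a ↔ Relation.ReflTransGen (Adj F) r b) := by
    intro r h0 a b hab
    constructor
    · intro h; exact h.tail hab
    · intro h
      rcases Relation.ReflTransGen.cases_tail h with h' | ⟨c, hc, hcb⟩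
      · subst h'; exact absurd h0 (inDeg_pos_of_mem hab)
      · rwa [pred_unique (hdeg b) hab hcb]
  have hw : ∀ r, inDeg F r = 0 → ∀ x y : V, WConn F x y →
      Relation.ReflTransGen (Adj F) r x → Relation.ReflTransGen (Adj F) r y := by
    intro r h0 x y hxy
    induction hxy with
    | refl => exact id
    | tail _ hstep ih =>
        intro hx
        rcases hstep with h | h
        · exact (hkey r h0 _ _ h).mp (ih hx)
        · exact (hkey r h0 _ _ h).mpr (ih hx)
  intro i
  obtain ⟨r, h0, hri⟩ := hanc i
  refine ⟨r, wconn_symm (wconn_of_rtg hri), ?_⟩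
  intro i' hi'
  have hri' : Relation.ReflTransGen (Adj F) r i' := hw r h0 i i' hi' hri
  obtain ⟨p, hp, h1, h2⟩ := exists_path_of_rtg hri'
  refine ⟨p, ⟨hp, h1, h2⟩, ?_⟩
  rintro q ⟨hq, hq1, hq2⟩
  exact path_unique hdeg h0 q.length q p le_rfl hq hp hq1 h1 (hq2.trans h2.symm)

lemma inDeg_le_one_of_isForest {F : Finset (V × V)} (hF : IsForest F) (j : V) :
    inDeg F j ≤ 1 := by
  show (F.filter (fun a => a.2 = j)).card ≤ 1
  rw [Finset.card_le_one]
  rintro ⟨u, ju⟩ hu ⟨w, jw⟩ hw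
  obtain ⟨huF, hju⟩ := Finset.mem_filter.mp hu
  obtain ⟨hwF, hjw⟩ := Finset.mem_filter.mp hw
  have hju' : ju = j := hju
  have hjw' : jw = j := hjw
  rw [hju'] at huF ⊢
  rw [hjw'] at hwF ⊢
  obtain ⟨r, hrmem, hr⟩ := hF j
  obtain ⟨pu, ⟨hpu, hpu1, hpu2⟩, -⟩ := hr u (wconn_step (Or.inr huF))
  obtain ⟨pw, ⟨hpw, hpw1, hpw2⟩, -⟩ := hr w (wconn_step (Or.inr hwF))
  obtain ⟨pj, -, hjuniq⟩ := hr j Relation.ReflTransGen.refl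
  have eu : pu ++ [j] = pj := hjuniq _ ⟨isPath_concat hpu hpu2 huF,
    (head?_append_single (isPath_ne_nil hpu)).trans hpu1, List.getLast?_concat⟩
  have ew : pw ++ [j] = pj := hjuniq _ ⟨isPath_concat hpw hpw2 hwF,
    (head?_append_single (isPath_ne_nil hpw)).trans hpw1, List.getLast?_concat⟩
  have : pu = pw := by
    have h := eu.trans ew.symm
    exact List.append_cancel_right h
  subst this
  have : u = w := Option.some_injective _ (hpu2.symm.trans hpw2)
  rw [this]

lemma root_inDeg_zero {F : Finset (V × V)} {i ρ : V} (hmem : WConn F i ρ)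
    (hu : ∀ i' ∈ {j | WConn F i j}, ∃! p : List V,
      IsPath F p ∧ p.head? = some ρ ∧ p.getLast? = some i') :
    inDeg F ρ = 0 := by
  rw [inDeg_zero_iff]
  intro w hw
  have hwmem : WConn F i w := hmem.trans (wconn_step (Or.inr hw))
  obtain ⟨p, ⟨hp, h1, h2⟩, -⟩ := hu w hwmem
  obtain ⟨q, -, huniq⟩ := hu ρ hmem
  have e1 : (p ++ [ρ] : List V) = q := huniq _ ⟨isPath_concat hp h2 hw,
    (head?_append_single (isPath_ne_nil hp)).trans h1, List.getLast?_concat⟩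
  have e2 : ([ρ] : List V) = q := huniq _ ⟨trivial, rfl, rfl⟩
  rw [← e2] at e1
  have hlen := congrArg List.length e1
  simp at hlen
  exact isPath_ne_nil hp hlen

lemma circuitFree_subset {A F : Finset (V × V)} (h : F ⊆ A) (hA : CircuitFree A) :
    CircuitFree F := fun i hi => hA i (Relation.TransGen.mono (fun _ _ hab => h hab) _ _ hi)

lemma maxForests_nonempty {A : Finset (V × V)} (hA : CircuitFree A) :
    (maxForests A).Nonempty := by
  classical
  set S := A.powerset.filter (fun F => IsForest F) with hS
  have hSne : S.Nonempty := ⟨∅, Finset.mem_filter.mpr ⟨Finset.empty_mem_powerset A,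
    isForest_of_degrees (circuitFree_subset (Finset.empty_subset A) hA)
      (fun j => by simp [inDeg])⟩⟩
  obtain ⟨F, hFS, hFmax⟩ := S.exists_max_image Finset.card hSne
  have hmm := Finset.mem_filter.mp hFS
  have hFsub : F ⊆ A := Finset.mem_powerset.mp hmm.1
  have hFforest : IsForest F := hmm.2
  refine ⟨F, Finset.mem_filter.mpr ⟨Finset.mem_powerset.mpr hFsub, hFsub, hFforest, ?_⟩⟩
  intro a ha haF hins
  have hmem : insert a F ∈ S := Finset.mem_filter.mpr
    ⟨Finset.mem_powerset.mpr (Finset.insert_subset ha hFsub), hins⟩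
  have := hFmax _ hmem
  rw [Finset.card_insert_of_notMem haF] at this
  omega

lemma maxForest_weaklyConnected {A F : Finset (V × V)} (hA : CircuitFree A)
    (hroot : HasRoot A) (hF : F ∈ maxForests A) : WeaklyConnected F := by
  obtain ⟨r, hr⟩ := hroot
  have hmm := Finset.mem_filter.mp hF
  have hFsub : F ⊆ A := Finset.mem_powerset.mp hmm.1
  have hFforest : IsForest F := hmm.2.2.1
  have hFmax := hmm.2.2.2
  have hall : ∀ t, WConn F r t := by
    by_contra hcon
    push_neg at hcon
    obtain ⟨t, ht⟩ := hcon
    obtain ⟨ρ, hρmem, hρ⟩ := hFforest t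
    have hρ0 : inDeg F ρ = 0 := root_inDeg_zero hρmem hρ
    have hrρ : r ≠ ρ := by
      rintro rfl
      exact ht (wconn_symm hρmem)
    have htg : Relation.TransGen (Adj A) r ρ := by
      rcases Relation.reflTransGen_iff_eq_or_transGen.mp (hr ρ) with h | h
      · exact absurd h.symm hrρ
      · exact h
    obtain ⟨x, -, hxρ⟩ := Relation.TransGen.tail'_iff.mp htg
    have hxF : (x, ρ) ∉ F := fun h => inDeg_pos_of_mem h hρ0
    apply hFmax (x, ρ) hxρ hxF
    apply isForest_of_degrees
    · exact circuitFree_subset (Finset.insert_subset hxρ hFsub) hA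
    · intro j
      by_cases hj : j = ρ
      · subst hj
        show ((insert (x, j) F).filter (fun a => a.2 = j)).card ≤ 1
        rw [Finset.filter_insert, if_pos rfl]
        have h0 : (F.filter (fun a => a.2 = j)).card = 0 := hρ0
        calc (insert (x, j) (F.filter fun a => a.2 = j)).card
            ≤ (F.filter fun a => a.2 = j).card + 1 := Finset.card_insert_le _ _
          _ = 1 := by rw [h0]
      · have heq : inDeg (insert (x, ρ) F) j = inDeg F j := by
          show ((insert (x, ρ) F).filter (fun a => a.2 = j)).card = _
          rw [Finset.filter_insert, if_neg (fun h => hj (by simpa using h.symm))]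
          rfl
        rw [heq]
        exact inDeg_le_one_of_isForest hFforest j
  intro i j
  exact (wconn_symm (hall i)).trans (hall j)

lemma comps_eq_univ {F : Finset (V × V)} [Nonempty V] (h : WeaklyConnected F) :
    comps F = {Finset.univ} := by
  unfold comps
  have hcomp : ∀ i : V, compF F i = Finset.univ := by
    intro i; unfold compF
    rw [Finset.filter_true_of_mem]
    intro j _; exact h i j
  rw [show (fun i : V => compF F i) = (fun _ => Finset.univ) from funext hcomp]
  exact Finset.image_const Finset.univ_nonempty _

lemma sum_marg_eq {A F : Finset (V × V)} (hA : CircuitFree A) (hroot : HasRoot A)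
    (hF : F ∈ maxForests A) (v : Finset V → ℝ) :
    ∑ i : V, marg v F i = v Finset.univ := by
  obtain ⟨r, -⟩ := id hroot
  have hconn := maxForest_weaklyConnected hA hroot hF
  have hFforest : IsForest F := (Finset.mem_filter.mp hF).2.2.1
  obtain ⟨ρ, hρmem, hρ⟩ := hFforest r
  have hdeg := inDeg_le_one_of_isForest hFforest
  have hρ0 : inDeg F ρ = 0 := root_inDeg_zero hρmem hρ
  have hρj : ∀ j : V, ∃! p : List V,
      IsPath F p ∧ p.head? = some ρ ∧ p.getLast? = some j :=
    fun j => hρ j (hconn r j)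
  have h1 : ∀ j, j ≠ ρ → inDeg F j = 1 := by
    intro j hj
    refine le_antisymm (hdeg j) ?_
    obtain ⟨p, ⟨hp, hph, hpl⟩, -⟩ := hρj j
    have hlen : 2 ≤ p.length := by
      cases p with
      | nil => exact absurd hp (by simp [IsPath])
      | cons x t =>
          cases t with
          | nil =>
              simp at hph hpl
              subst hph
              exact absurd hpl.symm hj
          | cons y l => simp
    obtain ⟨q, u, -, -, -, -, hu⟩ := isPath_decomp hp hph hpl hlen
    have : (u, j) ∈ F.filter (fun a => a.2 = j) := Finset.mem_filter.mpr ⟨hu, rfl⟩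
    exact Finset.card_pos.mpr ⟨_, this⟩
  have hsucc : succSet F ρ = Finset.univ := by
    apply Finset.eq_univ_iff_forall.mpr
    intro j
    obtain ⟨p, ⟨hp, hph, hpl⟩, -⟩ := hρj j
    exact Finset.mem_filter.mpr ⟨Finset.mem_univ j, rtg_of_isPath hp hph hpl⟩
  have hcard : ∀ j : V, (Finset.univ.filter (fun i : V => (i, j) ∈ F)).card = inDeg F j := by
    intro j
    show _ = (F.filter (fun a => a.2 = j)).card
    apply Finset.card_bij (fun i _ => (i, j))
    · intro i hi; exact Finset.mem_filter.mpr ⟨(Finset.mem_filter.mp hi).2, rfl⟩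
    · intro a _ b _ h; exact congrArg Prod.fst h
    · intro b hb
      obtain ⟨hbF, hb2⟩ := Finset.mem_filter.mp hb
      have hb2' : b.2 = j := hb2
      refine ⟨b.1, Finset.mem_filter.mpr ⟨Finset.mem_univ _, ?_⟩, ?_⟩
      · rw [← hb2']; exact hbF
      · rw [← hb2']
  have hsum2 : ∑ i : V, ∑ j ∈ immSucc F i, v (succSet F j)
      = ∑ j : V, (inDeg F j : ℝ) * v (succSet F j) := by
    have hitr : ∀ i : V, ∑ j ∈ immSucc F i, v (succSet F j)
        = ∑ j : V, if (i, j) ∈ F then v (succSet F j) else 0 := by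
      intro i
      rw [show immSucc F i = Finset.univ.filter (fun j => (i, j) ∈ F) from rfl,
        Finset.sum_filter]
    rw [Finset.sum_congr rfl (fun i _ => hitr i), Finset.sum_comm]
    refine Finset.sum_congr rfl fun j _ => ?_
    rw [← Finset.sum_filter, Finset.sum_const, ← hcard j, nsmul_eq_mul]
  have hmarg : ∀ i : V, marg v F i
      = v (succSet F i) - ∑ j ∈ immSucc F i, v (succSet F j) := fun i => rfl
  rw [Finset.sum_congr rfl (fun i _ => hmarg i), Finset.sum_sub_distrib, hsum2,
    ← Finset.sum_sub_distrib]
  have hterm : ∀ j : V, v (succSet F j) - (inDeg F j : ℝ) * v (succSet F j)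
      = if j = ρ then v Finset.univ else 0 := by
    intro j
    by_cases hj : j = ρ
    · subst hj
      rw [if_pos rfl, hρ0, hsucc]
      simp
    · rw [if_neg hj, h1 j hj]
      simp
  rw [Finset.sum_congr rfl (fun j _ => hterm j),
    Finset.sum_ite_eq' Finset.univ ρ (fun _ => v Finset.univ), if_pos (Finset.mem_univ ρ)]

end Aux

/-- if `Γ` is quasi-strongly connected then the productivity equals `v(N)`;
equivalently the Average Forest measure is efficient. -/
theorem productivity_of_hasRoot {V : Type*} [Fintype V] [DecidableEq V]
    (A : Finset (V × V)) (hA : CircuitFree A) (hroot : HasRoot A) :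
    ∀ v : Finset V → ℝ,
      Productivity v A = v Finset.univ ∧ ∑ i : V, AF v A i = v Finset.univ := by
  intro v
  have hne : (maxForests A).Nonempty := maxForests_nonempty hA
  have hcard : ((maxForests A).card : ℝ) ≠ 0 :=
    Nat.cast_ne_zero.mpr (Finset.card_pos.mpr hne).ne'
  haveI : Nonempty V := ⟨hroot.choose⟩
  have hcomps : ∀ F ∈ maxForests A, (∑ K ∈ comps F, v K) = v Finset.univ := by
    intro F hF
    rw [comps_eq_univ (maxForest_weaklyConnected hA hroot hF), Finset.sum_singleton]
  constructor
  · unfold Productivity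
    rw [Finset.sum_congr rfl hcomps, Finset.sum_const, nsmul_eq_mul,
      mul_div_cancel_left₀ _ hcard]
  · unfold AF
    rw [← Finset.sum_div, Finset.sum_comm,
      Finset.sum_congr rfl (fun F hF => sum_marg_eq hA hroot hF v),
      Finset.sum_const, nsmul_eq_mul, mul_div_cancel_left₀ _ hcard]
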